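/- A point v* = (v1*,...,vN*) satisfies the MACE equilibrium conditions F_i(x* + u_i*) = x* for all i and ∑ u_i* = 0 (with v_i* = x* + u_i*, x* = (1/N)∑ v_i*) if and only if v* is a fixed point of (2G - I)(2F - I), where F is the stacked operator and G the averaging operator. -/

import Mathlib

theorem mace_equilibrium_iff_fixed_point
    (n N : ℕ) (hN : 0 < N)
    (Fi : Fin N → (EuclideanSpace ℝ (Fin n) → EuclideanSpace ℝ (Fin n)))
    (F G : (Fin N → EuclideanSpace ℝ (Fin n)) → (Fin N → EuclideanSpace ℝ (Fin n)))
    (hF : ∀ z, F z = fun i => Fi i (z i))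
    (hG : ∀ z, G z = fun _ => (1 / (N : ℝ)) • ∑ i, z i)
    (v : Fin N → EuclideanSpace ℝ (Fin n))
    (xstar : EuclideanSpace ℝ (Fin n))
    (hx : xstar = (1 / (N : ℝ)) • ∑ i, v i) :
    (∀ i, Fi i (v i) = xstar) ↔ 2 • G (2 • F v - v) - (2 • F v - v) = v := by
  have hNr : (N : ℝ) ≠ 0 := Nat.cast_ne_zero.mpr hN.ne'
  have hcancel : ∀ x : EuclideanSpace ℝ (Fin n), (1 / (N : ℝ)) • (N • x) = x := by
    intro x
    rw [← Nat.cast_smul_eq_nsmul ℝ, smul_smul]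
    simp [hNr]
  have hw : (2 • F v - v) = fun i => 2 • Fi i (v i) - v i := by
    funext i; simp [hF]
  rw [hw, hG]
  have hsum : (∑ i, (2 • Fi i (v i) - v i)) = 2 • (∑ i, Fi i (v i)) - ∑ i, v i := by
    rw [Finset.sum_sub_distrib, ← Finset.smul_sum]
  constructor
  · intro h
    funext i
    simp only [Pi.sub_apply, Pi.smul_apply, h, hx]
    rw [Finset.sum_sub_distrib, Finset.sum_const, Finset.card_univ, Fintype.card_fin,
      smul_sub, hcancel]
    abel
  · intro h i
    have hall : ∀ j, Fi j (v j) =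
        (1 / (N : ℝ)) • (2 • (∑ k, Fi k (v k)) - ∑ k, v k) := by
      intro j
      have hj := congrFun h j
      simp only [Pi.sub_apply, Pi.smul_apply, hsum] at hj
      have h2 : (2:ℕ) • ((1 / (N : ℝ)) • (2 • (∑ k, Fi k (v k)) - ∑ k, v k))
          = 2 • Fi j (v j) := by
        have h3 := sub_eq_iff_eq_add.mp hj
        rw [h3]; abel
      rw [← Nat.cast_smul_eq_nsmul ℝ 2 (Fi j (v j)),
        ← Nat.cast_smul_eq_nsmul ℝ 2 ((1 / (N : ℝ)) • (2 • (∑ k, Fi k (v k)) - ∑ k, v k))] at h2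
      exact (smul_right_injective _ (by norm_num : ((2:ℕ):ℝ) ≠ 0) h2).symm
    have hS' : (∑ k, Fi k (v k)) = 2 • (∑ k, Fi k (v k)) - ∑ k, v k := by
      calc (∑ k, Fi k (v k))
          = ∑ _j : Fin N, (1 / (N : ℝ)) • (2 • (∑ k, Fi k (v k)) - ∑ k, v k) :=
            Finset.sum_congr rfl fun j _ => hall j
        _ = N • ((1 / (N : ℝ)) • (2 • (∑ k, Fi k (v k)) - ∑ k, v k)) := by
            rw [Finset.sum_const, Finset.card_univ, Fintype.card_fin]
        _ = (1 / (N : ℝ)) • (N • (2 • (∑ k, Fi k (v k)) - ∑ k, v k)) :=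
            smul_comm _ _ _
        _ = 2 • (∑ k, Fi k (v k)) - ∑ k, v k := hcancel _
    have hsS : (∑ k, Fi k (v k)) = ∑ k, v k := by
      have h1 : (∑ k, v k) - (∑ k, Fi k (v k)) = 0 := by
        have h0 : (∑ k, Fi k (v k)) - (2 • (∑ k, Fi k (v k)) - ∑ k, v k) = 0 :=
          sub_eq_zero.mpr hS'
        rw [← h0]; abel
      exact (sub_eq_zero.mp h1).symm
    rw [hall i, hsS, two_nsmul, add_sub_cancel_right, hx]
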